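/- Reformulation of Sparsest Cut over L¹: for symmetric C,D : {1,…,n}² → [0,∞) with D not identically zero, the minimum over nonempty proper subsets S of {1,…,n} of (Σᵢⱼ C(i,j)|𝟙_S(i)-𝟙_S(j)|)/(Σᵢⱼ D(i,j)|𝟙_S(i)-𝟙_S(j)|) equals the infimum over all f₁,…,fₙ ∈ L¹ of (Σᵢⱼ C(i,j)‖fᵢ-fⱼ‖₁)/(Σᵢⱼ D(i,j)‖fᵢ-fⱼ‖₁). -/

import Mathlib

open MeasureTheory

noncomputable abbrev SpaceL1 := Lp ℝ 1 (volume : Measure ℝ)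

/-- Indicator of a cut S ⊆ {1,…,n}. -/
def cutInd {n : ℕ} (S : Finset (Fin n)) (i : Fin n) : ℝ := if i ∈ S then 1 else 0

lemma sum_expand {n : ℕ} (C D : Fin n → Fin n → ℝ) (m : ℝ) (x : Fin n → Fin n → ℝ) :
    ∑ i, ∑ j, (C i j - m * D i j) * x i j
      = (∑ i, ∑ j, C i j * x i j) - m * (∑ i, ∑ j, D i j * x i j) := by
  simp [sub_mul, Finset.sum_sub_distrib, Finset.mul_sum, mul_assoc]

lemma cut_key {n : ℕ} (C D : Fin n → Fin n → ℝ) (m : ℝ)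
    (h : ∀ S : Finset (Fin n), S.Nonempty → S ≠ Finset.univ →
      m * (∑ i, ∑ j, D i j * |cutInd S i - cutInd S j|) ≤
        ∑ i, ∑ j, C i j * |cutInd S i - cutInd S j|)
    (a : Fin n → ℝ) :
    m * (∑ i, ∑ j, D i j * |a i - a j|) ≤ ∑ i, ∑ j, C i j * |a i - a j| := by
  set E : Fin n → Fin n → ℝ := fun i j => C i j - m * D i j with hE
  suffices hs : 0 ≤ ∑ i, ∑ j, E i j * |a i - a j| by
    rw [hE] at hs; rw [sum_expand C D m] at hs; linarith
  set φ : Fin n → ℝ → ℝ := fun i t => if t < a i then 1 else 0 with hφ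
  have hind : ∀ i j, (fun t => |φ i t - φ j t|)
      = (Set.Ico (min (a i) (a j)) (max (a i) (a j))).indicator (fun _ => (1:ℝ)) := by
    intro i j
    funext t
    simp only [hφ, Set.indicator_apply, Set.mem_Ico, min_le_iff, lt_max_iff]
    split_ifs with h1 h2 h3 h2 h3 h3 <;> (try push_neg at *) <;> simp_all <;>
      first
      | linarith
      | (rcases ‹_ ∨ _› with h | h <;> linarith)
  have hInt : ∀ i j, Integrable (fun t => |φ i t - φ j t|) volume := by
    intro i j
    rw [hind i j]
    refine (integrableOn_const ?_).integrable_indicator measurableSet_Ico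
    rw [Real.volume_Ico]; exact ENNReal.ofReal_ne_top
  have hIval : ∀ i j, ∫ t, |φ i t - φ j t| = |a i - a j| := by
    intro i j
    rw [hind i j, integral_indicator_const _ measurableSet_Ico, measureReal_def, Real.volume_Ico,
      ENNReal.toReal_ofReal (by simp [sub_nonneg, min_le_max]), max_sub_min_eq_abs,
      smul_eq_mul, mul_one]
    exact abs_sub_comm _ _
  have hterm : ∀ i j, E i j * |a i - a j| = ∫ t, E i j * |φ i t - φ j t| := by
    intro i j
    rw [integral_const_mul, hIval i j]
  have hswap : ∑ i, ∑ j, E i j * |a i - a j| = ∫ t, ∑ i, ∑ j, E i j * |φ i t - φ j t| := by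
    rw [integral_finset_sum _ (fun i _ => integrable_finset_sum _
      (fun j _ => (hInt i j).const_mul _))]
    refine Finset.sum_congr rfl fun i _ => ?_
    rw [integral_finset_sum _ (fun j _ => (hInt i j).const_mul _)]
    exact Finset.sum_congr rfl fun j _ => hterm i j
  rw [hswap]
  refine integral_nonneg fun t => ?_
  simp only [Pi.zero_apply]
  set S : Finset (Fin n) := Finset.univ.filter (fun i => t < a i) with hS
  have hci : ∀ i, φ i t = cutInd S i := by
    intro i; simp [hφ, cutInd, hS, Finset.mem_filter]
  simp only [hci]
  by_cases hne : S.Nonempty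
  · by_cases huniv : S = Finset.univ
    · have : ∀ i : Fin n, cutInd S i = 1 := fun i => by simp [cutInd, huniv]
      simp [this]
    · have := h S hne huniv
      rw [hE, sum_expand C D m]
      linarith
  · rw [Finset.not_nonempty_iff_eq_empty] at hne
    have : ∀ i : Fin n, cutInd S i = 0 := fun i => by simp [cutInd, hne]
    simp [this]

/-- Sparsest Cut reformulation over L¹: the minimum cut sparsity equals the
infimum of the corresponding ratio over all configurations f₁,…,fₙ ∈ L¹. -/
theorem stmt4 (n : ℕ) (hn : 2 ≤ n) (C D : Fin n → Fin n → ℝ)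
    (hCsym : ∀ i j, C i j = C j i) (hDsym : ∀ i j, D i j = D j i)
    (hC : ∀ i j, 0 ≤ C i j) (hD : ∀ i j, 0 ≤ D i j)
    (hpos : ∀ S : Finset (Fin n), S.Nonempty → S ≠ Finset.univ →
      0 < ∑ i, ∑ j, D i j * |cutInd S i - cutInd S j|) :
    sInf {r : ℝ | ∃ S : Finset (Fin n), S.Nonempty ∧ S ≠ Finset.univ ∧
        r = (∑ i, ∑ j, C i j * |cutInd S i - cutInd S j|) /
            (∑ i, ∑ j, D i j * |cutInd S i - cutInd S j|)} =
    sInf {r : ℝ | ∃ f : Fin n → SpaceL1,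
        0 < ∑ i, ∑ j, D i j * ‖f i - f j‖ ∧
        r = (∑ i, ∑ j, C i j * ‖f i - f j‖) /
            (∑ i, ∑ j, D i j * ‖f i - f j‖)} := by
  set A : Set ℝ := {r : ℝ | ∃ S : Finset (Fin n), S.Nonempty ∧ S ≠ Finset.univ ∧
      r = (∑ i, ∑ j, C i j * |cutInd S i - cutInd S j|) /
          (∑ i, ∑ j, D i j * |cutInd S i - cutInd S j|)} with hA
  set B : Set ℝ := {r : ℝ | ∃ f : Fin n → SpaceL1,
      0 < ∑ i, ∑ j, D i j * ‖f i - f j‖ ∧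
      r = (∑ i, ∑ j, C i j * ‖f i - f j‖) /
          (∑ i, ∑ j, D i j * ‖f i - f j‖)} with hB
  -- the unit-norm L¹ witness
  have hvol : (volume : Measure ℝ) (Set.Ioc (0:ℝ) 1) ≠ ⊤ := by
    rw [Real.volume_Ioc]; exact ENNReal.ofReal_ne_top
  set g : SpaceL1 := indicatorConstLp 1 measurableSet_Ioc hvol (1:ℝ) with hg
  have hgnorm : ‖g‖ = 1 := by
    rw [hg, norm_indicatorConstLp one_ne_zero ENNReal.one_ne_top]
    simp [Real.volume_Ioc]
  -- A ⊆ B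
  have hAB : A ⊆ B := by
    rintro r ⟨S, hSne, hSu, rfl⟩
    have hnorm : ∀ i j : Fin n, ‖cutInd S i • g - cutInd S j • g‖
        = |cutInd S i - cutInd S j| := by
      intro i j
      rw [← sub_smul, norm_smul, hgnorm, mul_one, Real.norm_eq_abs]
    refine ⟨fun i => cutInd S i • g, ?_, ?_⟩
    · simp only [hnorm]
      exact hpos S hSne hSu
    · simp only [hnorm]
  -- nonemptiness of A
  have h0 : (0 : ℕ) < n := by omega
  have hS0ne : (({⟨0, h0⟩} : Finset (Fin n))).Nonempty := Finset.singleton_nonempty _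
  have hS0u : ({⟨0, h0⟩} : Finset (Fin n)) ≠ Finset.univ := by
    intro hcon
    have h1 : (⟨1, by omega⟩ : Fin n) ∈ ({⟨0, h0⟩} : Finset (Fin n)) := by
      rw [hcon]; exact Finset.mem_univ _
    simp [Fin.mk.injEq] at h1
  have hAne : A.Nonempty := ⟨_, ⟨_, hS0ne, hS0u, rfl⟩⟩
  have hBne : B.Nonempty := hAne.mono hAB
  -- lower bounds
  have hAbdd : BddBelow A := by
    refine ⟨0, ?_⟩
    rintro r ⟨S, hSne, hSu, rfl⟩
    exact div_nonneg (Finset.sum_nonneg fun i _ => Finset.sum_nonneg fun j _ =>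
      mul_nonneg (hC i j) (abs_nonneg _)) (hpos S hSne hSu).le
  have hBbdd : BddBelow B := by
    refine ⟨0, ?_⟩
    rintro r ⟨f, hf, rfl⟩
    exact div_nonneg (Finset.sum_nonneg fun i _ => Finset.sum_nonneg fun j _ =>
      mul_nonneg (hC i j) (norm_nonneg _)) hf.le
  refine le_antisymm ?_ (csInf_le_csInf hBbdd hAne hAB)
  -- hard direction: sInf A ≤ sInf B
  refine le_csInf hBne ?_
  rintro r ⟨f, hf, rfl⟩
  set m := sInf A with hm
  rw [le_div_iff₀ hf]
  -- m satisfies the cut hypothesis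
  have hmle : ∀ S : Finset (Fin n), S.Nonempty → S ≠ Finset.univ →
      m * (∑ i, ∑ j, D i j * |cutInd S i - cutInd S j|) ≤
        ∑ i, ∑ j, C i j * |cutInd S i - cutInd S j| := by
    intro S hSne hSu
    have : m ≤ (∑ i, ∑ j, C i j * |cutInd S i - cutInd S j|) /
        (∑ i, ∑ j, D i j * |cutInd S i - cutInd S j|) :=
      csInf_le hAbdd ⟨S, hSne, hSu, rfl⟩
    exact (le_div_iff₀ (hpos S hSne hSu)).1 this
  -- norms as integrals
  have hnormInt : ∀ i j : Fin n, ‖f i - f j‖ = ∫ x, |(f i : ℝ → ℝ) x - (f j : ℝ → ℝ) x| := by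
    intro i j
    rw [L1.norm_eq_integral_norm]
    refine integral_congr_ae ?_
    filter_upwards [Lp.coeFn_sub (f i) (f j)] with x hx
    rw [hx]; simp [Real.norm_eq_abs]
  have hIntf : ∀ i j : Fin n, Integrable (fun x => |(f i : ℝ → ℝ) x - (f j : ℝ → ℝ) x|)
      volume := fun i j => ((L1.integrable_coeFn (f i)).sub (L1.integrable_coeFn (f j))).abs
  have hswap : ∀ (E : Fin n → Fin n → ℝ),
      ∑ i, ∑ j, E i j * ‖f i - f j‖
        = ∫ x, ∑ i, ∑ j, E i j * |(f i : ℝ → ℝ) x - (f j : ℝ → ℝ) x| := by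
    intro E
    rw [integral_finset_sum _ (fun i _ => integrable_finset_sum _
      (fun j _ => (hIntf i j).const_mul _))]
    refine Finset.sum_congr rfl fun i _ => ?_
    rw [integral_finset_sum _ (fun j _ => (hIntf i j).const_mul _)]
    refine Finset.sum_congr rfl fun j _ => ?_
    rw [integral_const_mul, ← hnormInt i j]
  calc m * ∑ i, ∑ j, D i j * ‖f i - f j‖
      = ∫ x, m * ∑ i, ∑ j, D i j * |(f i : ℝ → ℝ) x - (f j : ℝ → ℝ) x| := by
        rw [integral_const_mul, ← hswap D]
    _ ≤ ∫ x, ∑ i, ∑ j, C i j * |(f i : ℝ → ℝ) x - (f j : ℝ → ℝ) x| := by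
        refine integral_mono ?_ ?_ ?_
        · exact (integrable_finset_sum _ (fun i _ => integrable_finset_sum _
            (fun j _ => (hIntf i j).const_mul _))).const_mul m
        · exact integrable_finset_sum _ (fun i _ => integrable_finset_sum _
            (fun j _ => (hIntf i j).const_mul _))
        · intro x
          exact cut_key C D m hmle (fun i => (f i : ℝ → ℝ) x)
    _ = ∑ i, ∑ j, C i j * ‖f i - f j‖ := (hswap C).symm
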